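/- Let θ : (-t₀, t₀) → ℝ and φ : (-t₀,t₀) × Σ → ℝ with φ > 0, and suppose θ satisfies on each slice Σ_t the evolution equation dθ/dt = L_t(φ) + τφθ, where L_t(φ) = -Δφ + 2⟨X,∇φ⟩ + (Q - ½θ² + div X - |X|²)φ and τ is bounded. Fix ε ∈ (0,t₀), choose a constant c with τφ ≤ c on [0,ε]×Σ, and suppose θ(t) ≥ 0 on [0,ε). If θ(0) = 0 and for every t ∈ [0,ε) the positivity L_t(φ) > 0 (pointwise on Σ) is impossible, then θ ≡ 0 on [0,ε). -/

import Mathlib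

/-- Core analytic step of Theorem 3.1: along the foliation `M_t`, the constant null
expansion `θ(t)` satisfies the evolution equation `dθ/dt = L_t(φ) + τφθ` (pointwise on
`M`, where `Lφ t x` denotes `L_t(φ)(x)`).  If `φ > 0`, `τφ ≤ c` on `[0,ε] × M`,
`θ ≥ 0` on `[0,ε)`, `θ(0) = 0`, and for no `t ∈ [0,ε)` is `L_t(φ) > 0` everywhere on
`M`, then `θ ≡ 0` on `[0,ε)`. -/
theorem stmt_9 {M : Type*} [TopologicalSpace M] [CompactSpace M] [Nonempty M]
    (t₀ ε : ℝ) (hε : ε ∈ Set.Ioo 0 t₀)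
    (θ θ' : ℝ → ℝ) (φ τ Lφ : ℝ → M → ℝ) (c : ℝ)
    (hφpos : ∀ t ∈ Set.Ioo (-t₀) t₀, ∀ x, 0 < φ t x)
    (hdiff : ∀ t ∈ Set.Ioo (-t₀) t₀, HasDerivAt θ (θ' t) t)
    (hevol : ∀ t ∈ Set.Ioo (-t₀) t₀, ∀ x, θ' t = Lφ t x + τ t x * φ t x * θ t)
    (hc : ∀ t ∈ Set.Icc 0 ε, ∀ x, τ t x * φ t x ≤ c)
    (hnonneg : ∀ t ∈ Set.Ico (0:ℝ) ε, 0 ≤ θ t)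
    (h0 : θ 0 = 0)
    (hnopos : ∀ t ∈ Set.Ico (0:ℝ) ε, ¬ (∀ x, 0 < Lφ t x)) :
    ∀ t ∈ Set.Ico (0:ℝ) ε, θ t = 0 := by
  obtain ⟨hε0, hεt₀⟩ := hε
  have hsub : Set.Ico (0:ℝ) ε ⊆ Set.Ioo (-t₀) t₀ := by
    intro t ht
    exact ⟨by linarith [ht.1], by linarith [ht.2]⟩
  set g : ℝ → ℝ := fun t => Real.exp (-c * t) * θ t with hg
  have hgderiv : ∀ t ∈ Set.Ioo (-t₀) t₀,
      HasDerivAt g (Real.exp (-c * t) * (θ' t - c * θ t)) t := by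
    intro t ht
    have := ((Real.hasDerivAt_exp (-c * t)).comp t
        ((hasDerivAt_id t).const_mul (-c))).mul (hdiff t ht)
    simp only [Function.comp] at this
    exact this.congr_deriv (by ring)
  -- g is antitone on Ico 0 ε
  have hgle : ∀ t ∈ Set.Ico (0:ℝ) ε, g t ≤ g 0 := by
    intro t ht
    have hmono : AntitoneOn g (Set.Ico (0:ℝ) ε) := by
      apply antitoneOn_of_deriv_nonpos (convex_Ico 0 ε)
      · exact ContinuousOn.mono
          (fun s hs => ((hgderiv s hs).continuousAt).continuousWithinAt) hsub
      · intro s hs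
        rw [interior_Ico] at hs
        exact (hgderiv s (hsub ⟨le_of_lt hs.1, hs.2⟩)).differentiableAt.differentiableWithinAt
      · intro s hs
        rw [interior_Ico] at hs
        have hs' : s ∈ Set.Ico (0:ℝ) ε := ⟨le_of_lt hs.1, hs.2⟩
        have hd := hgderiv s (hsub hs')
        rw [hd.deriv]
        have hnn := hnonneg s hs'
        obtain ⟨x, hx⟩ := by
          have := hnopos s hs'
          push_neg at this
          exact this
        have hθ' : θ' s = Lφ s x + τ s x * φ s x * θ s := hevol s (hsub hs') x
        have hτφ : τ s x * φ s x ≤ c := hc s ⟨hs'.1, le_of_lt hs'.2⟩ x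
        have : θ' s ≤ c * θ s := by
          rw [hθ']
          nlinarith
        have := sub_nonpos.mpr this
        exact mul_nonpos_of_nonneg_of_nonpos (Real.exp_pos _).le this
    exact hmono (Set.left_mem_Ico.mpr hε0) ht ht.1
  intro t ht
  have h1 : g t ≤ 0 := by
    have := hgle t ht
    simpa [hg, h0] using this
  simp only [hg] at h1
  have h2 : 0 ≤ θ t := hnonneg t ht
  have hexp : 0 < Real.exp (-c * t) := Real.exp_pos _
  nlinarith [h1, h2, hexp]
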